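/- (Proposition 2, separation inequality) Let G and H be simple graphs on n vertices with the same maximum vertex degree d ≥ 1, let A = A(G) + 2d·E and B = A(H) + 2d·E, let N be a positive integer, let φ be a permutation of {1,…,n}, let j = φ(k) for some k with 1 ≤ k ≤ n, and let ε_1, …, ε_k be rationals with ε_t = m_t/10^N, m_t an integer, 0 < m_t < 10^N. For 0 ≤ i ≤ k define A^{(i)} = A + Σ_{t=1}^{i} ε_t E_t and B^{(i)} = B + Σ_{t=1}^{i} ε_t E_{φ(t)}. Suppose det A^{(i)} = det B^{(i)} for all 0 ≤ i ≤ k−1 but det A^{(k)} ≠ det B^{(k)}. Then det(A^{(k)})_{{k}} / det A^{(k)} ≠ det(B^{(k)})_{{j}} / det B^{(k)}, and moreover |det(A^{(k)})_{{k}} / det A^{(k)} − det(B^{(k)})_{{j}} / det B^{(k)}| > 1/(10^{2kN}·(3(d+1))^{2n}). -/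

import Mathlib

/-- For an `n × n` matrix `A` and a subset `c` of the index set, `minorDet A c` is the
determinant of the submatrix of `A` obtained by deleting the rows and columns whose
indices belong to `c`. -/
def minorDet {n : ℕ} {R : Type*} [CommRing R] (A : Matrix (Fin n) (Fin n) R)
    (c : Finset (Fin n)) : R :=
  (A.submatrix (fun i : ↥(cᶜ) => (i : Fin n)) fun i : ↥(cᶜ) => (i : Fin n)).det

section Aux

lemma det_bounds {n : ℕ} (M : Matrix (Fin n) (Fin n) ℝ) (hsym : M.IsHermitian)
    (lo hi r : ℝ) (hlo : ∀ t, lo ≤ M t t) (hhi : ∀ t, M t t ≤ hi)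
    (hr : ∀ t, ∑ s ∈ Finset.univ.erase t, |M t s| ≤ r) (hpos : 0 < lo - r) :
    0 < M.det ∧ M.det ≤ (hi + r) ^ n := by
  have key : ∀ i, lo - r ≤ hsym.eigenvalues i ∧ hsym.eigenvalues i ≤ hi + r := by
    intro i
    have hspec : hsym.eigenvalues i ∈ spectrum ℝ M := hsym.eigenvalues_mem_spectrum_real i
    have hspec' : hsym.eigenvalues i ∈ spectrum ℝ (Matrix.toLin' M) := by
      rwa [show Matrix.toLin' M = Matrix.toLinAlgEquiv' M from rfl,
        AlgEquiv.spectrum_eq Matrix.toLinAlgEquiv' M]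
    have heig := Module.End.HasEigenvalue.of_mem_spectrum hspec'
    obtain ⟨t, ht⟩ := eigenvalue_mem_ball heig
    rw [Metric.mem_closedBall, Real.dist_eq] at ht
    have h1 : ∑ s ∈ Finset.univ.erase t, ‖M t s‖ ≤ r := by
      simpa [Real.norm_eq_abs] using hr t
    have h2 := abs_le.mp (le_trans ht h1)
    exact ⟨by linarith [hlo t, h2.1], by linarith [hhi t, h2.2]⟩
  rw [hsym.det_eq_prod_eigenvalues]
  constructor
  · exact Finset.prod_pos fun i _ => lt_of_lt_of_le hpos (key i).1
  · calc ∏ i, (hsym.eigenvalues i : ℝ) ≤ ∏ _i : Fin n, (hi + r) :=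
          Finset.prod_le_prod (fun i _ => le_of_lt (lt_of_lt_of_le hpos (key i).1))
            (fun i _ => (key i).2)
    _ = (hi + r) ^ n := by simp

lemma minorDet_eq_det_submatrix {n : ℕ} {R : Type*} [CommRing R]
    (A : Matrix (Fin (n + 1)) (Fin (n + 1)) R) (k : Fin (n + 1))
    (f : Fin n → Fin (n + 1)) (hf : Function.Injective f) (hfk : ∀ i, f i ≠ k) :
    minorDet A {k} = (A.submatrix f f).det := by
  have hcard : Fintype.card ↥(({k} : Finset (Fin (n+1)))ᶜ) = n := by
    simp [Fintype.card_coe]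
  have hb : Function.Bijective (fun i : Fin n =>
      (⟨f i, by simp [hfk i]⟩ : ↥(({k} : Finset (Fin (n+1)))ᶜ))) := by
    rw [Fintype.bijective_iff_injective_and_card]
    exact ⟨fun a b hab => hf (congrArg Subtype.val hab), by simp [hcard]⟩
  let e : Fin n ≃ ↥(({k} : Finset (Fin (n+1)))ᶜ) := Equiv.ofBijective _ hb
  rw [minorDet, ← Matrix.det_submatrix_equiv_self e]
  congr 1

lemma det_updateRow_single {n : ℕ} {R : Type*} [CommRing R]
    (M : Matrix (Fin n) (Fin n) R) (k : Fin n) :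
    (M.updateRow k (Pi.single k 1)).det = minorDet M {k} := by
  cases n with
  | zero => exact k.elim0
  | succ m =>
    set M' := M.updateRow k (Pi.single k 1) with hM'
    let e : Fin (m+1) ≃ Fin (m+1) := Equiv.swap k (Fin.last m)
    have hek : e (Fin.last m) = k := Equiv.swap_apply_right k (Fin.last m)
    have h1 : M'.det = (M'.submatrix e e).det := (Matrix.det_submatrix_equiv_self e M').symm
    rw [h1, Matrix.det_succ_row (M'.submatrix e e) (Fin.last m)]
    have hrow : ∀ j, (M'.submatrix e e) (Fin.last m) j = if j = Fin.last m then 1 else 0 := by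
      intro j
      have hiff : e j = k ↔ j = Fin.last m := by rw [← hek, e.apply_eq_iff_eq]
      simp only [Matrix.submatrix_apply, hek, hM', Matrix.updateRow_self, Pi.single_apply, hiff]
    rw [Finset.sum_eq_single (Fin.last m)]
    · rw [hrow, if_pos rfl, mul_one]
      have hsign : ((-1 : R)) ^ ((Fin.last m : ℕ) + (Fin.last m : ℕ)) = 1 :=
        Even.neg_one_pow ⟨m, rfl⟩
      rw [hsign, one_mul, Fin.succAbove_last]
      have hsub : ((M'.submatrix e e).submatrix Fin.castSucc Fin.castSucc) =
          M.submatrix (e ∘ Fin.castSucc) (e ∘ Fin.castSucc) := by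
        ext a b
        simp only [Matrix.submatrix_apply, Function.comp_apply, hM']
        rw [Matrix.updateRow_ne]
        intro h
        have : (Fin.castSucc a) = Fin.last m := by rw [← hek] at h; exact e.injective h
        exact (Fin.castSucc_lt_last a).ne this
      rw [hsub]
      exact (minorDet_eq_det_submatrix M k _
        (e.injective.comp (Fin.castSucc_injective m))
        (fun i h => (Fin.castSucc_lt_last i).ne (e.injective (h.trans hek.symm)))).symm
    · intro j _ hj
      rw [hrow, if_neg hj, mul_zero, zero_mul]
    · intro h; exact absurd (Finset.mem_univ _) h

lemma smul_stdBasis_apply {n : ℕ} (x : Fin n) (c : ℝ) (a b : Fin n) :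
    (c • Matrix.single x x (1:ℝ)) a b = if x = a ∧ x = b then c else 0 := by
  rw [Matrix.smul_apply, Matrix.single, smul_eq_mul]
  simp only [Matrix.of_apply]
  split <;> simp

lemma det_add_smul_stdBasis {n : ℕ} (M : Matrix (Fin n) (Fin n) ℝ) (k : Fin n) (c : ℝ) :
    (M + c • Matrix.single k k 1).det = M.det + c * minorDet M {k} := by
  have h : M + c • Matrix.single k k 1
      = M.updateRow k (M k + c • (Pi.single k 1 : Fin n → ℝ)) := by
    ext a b
    rw [Matrix.add_apply, smul_stdBasis_apply]
    by_cases hab : a = k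
    · subst hab
      rw [Matrix.updateRow_self]
      simp [Pi.single_apply, eq_comm]
    · rw [Matrix.updateRow_ne hab, if_neg (fun hc => hab hc.1.symm), add_zero]
  rw [h, Matrix.det_updateRow_add, Matrix.updateRow_eq_self, Matrix.det_updateRow_smul,
    det_updateRow_single]

lemma minorDet_add_smul_stdBasis {n : ℕ} (M : Matrix (Fin n) (Fin n) ℝ) (k : Fin n) (c : ℝ) :
    minorDet (M + c • Matrix.single k k 1) {k} = minorDet M {k} := by
  unfold minorDet
  congr 1
  ext a b
  have ha : (a : Fin n) ≠ k := Finset.notMem_singleton.mp (Finset.mem_compl.mp a.2)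
  rw [Matrix.submatrix_apply, Matrix.submatrix_apply, Matrix.add_apply, smul_stdBasis_apply,
    if_neg (fun hc => ha hc.1.symm), add_zero]

lemma det_int_scaled {ι : Type*} [Fintype ι] [DecidableEq ι] (M : Matrix ι ι ℝ) (v : ι → ℝ)
    (Z : Matrix ι ι ℤ) (h : ∀ a b, (Z a b : ℝ) = v b * M a b) :
    ((Z.det : ℤ) : ℝ) = (∏ a, v a) * M.det := by
  have h0 : Z.map (Int.cast : ℤ → ℝ) = Matrix.of (fun a b => v b * M a b) := by
    ext a b; exact h a b
  have h1 := RingHom.map_det (Int.castRingHom ℝ) Z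
  simp only [RingHom.mapMatrix_apply] at h1
  calc ((Z.det : ℤ) : ℝ) = (Z.map (Int.cast : ℤ → ℝ)).det := by
        rw [show ((Z.det : ℤ) : ℝ) = (Int.castRingHom ℝ) Z.det from rfl, h1]; rfl
    _ = (Matrix.of fun a b => v b * M a b).det := by rw [h0]
    _ = (∏ a, v a) * M.det := Matrix.det_mul_row v M

/-- Entry formula for the perturbed matrix. -/
lemma entry_formula {n d : ℕ} (Gr : SimpleGraph (Fin n)) [DecidableRel Gr.Adj]
    (ψ : Equiv.Perm (Fin n)) (ε : Fin n → ℝ) (i : ℕ) (a b : Fin n) :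
    ((Gr.adjMatrix ℝ + (2 * d : ℝ) • (1 : Matrix (Fin n) (Fin n) ℝ) +
      ∑ t ∈ Finset.univ.filter (fun t : Fin n => t.val < i),
        ε t • Matrix.single (ψ t) (ψ t) 1) : Matrix (Fin n) (Fin n) ℝ) a b
    = Gr.adjMatrix ℝ a b + (if a = b then (2 * d : ℝ) else 0)
      + (if a = b ∧ ((ψ.symm a : Fin n)).val < i then ε (ψ.symm a) else 0) := by
  rw [Matrix.add_apply, Matrix.add_apply, Matrix.sum_apply]
  congr 1
  · congr 1
    rw [Matrix.smul_apply, Matrix.one_apply, smul_eq_mul]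
    split <;> simp
  · simp only [smul_stdBasis_apply]
    by_cases hc : a = b ∧ ((ψ.symm a : Fin n)).val < i
    · obtain ⟨hab, hlt⟩ := hc
      subst hab
      rw [if_pos ⟨rfl, hlt⟩]
      rw [Finset.sum_eq_single_of_mem (ψ.symm a)]
      · simp
      · simp [hlt]
      · intro t _ ht
        rw [if_neg]
        rintro ⟨h1, -⟩
        exact ht (by rw [← h1]; simp)
    · rw [if_neg hc]
      apply Finset.sum_eq_zero
      intro t htmem
      rw [if_neg]
      rintro ⟨h1, h2⟩
      apply hc
      refine ⟨h1.symm.trans h2, ?_⟩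
      rw [← h1]
      simpa using htmem

lemma adj_row_sum {n : ℕ} (Gr : SimpleGraph (Fin n)) [DecidableRel Gr.Adj] (t : Fin n) :
    ∑ s, Gr.adjMatrix ℝ t s = (Gr.degree t : ℝ) := by
  simp [SimpleGraph.adjMatrix_apply, SimpleGraph.degree, SimpleGraph.neighborFinset_eq_filter,
    Finset.sum_boole]

/-- Determinant bounds for the perturbed matrix. -/
lemma det_bounds_graph {n d : ℕ} (hd : 1 ≤ d) (Gr : SimpleGraph (Fin n))
    [DecidableRel Gr.Adj] (hdG : Finset.univ.sup (fun v => Gr.degree v) = d)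
    (ψ : Equiv.Perm (Fin n)) (ε : Fin n → ℝ) (i : ℕ)
    (hε : ∀ t : Fin n, t.val < i → 0 < ε t ∧ ε t ≤ 1)
    (M : Matrix (Fin n) (Fin n) ℝ)
    (hM : M = Gr.adjMatrix ℝ + (2 * d : ℝ) • (1 : Matrix (Fin n) (Fin n) ℝ) +
      ∑ t ∈ Finset.univ.filter (fun t : Fin n => t.val < i),
        ε t • Matrix.single (ψ t) (ψ t) 1) :
    0 < M.det ∧ M.det ≤ ((3 : ℝ) * d + 1) ^ n := by
  have hent : ∀ a b, M a b = Gr.adjMatrix ℝ a b + (if a = b then (2 * d : ℝ) else 0)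
      + (if a = b ∧ ((ψ.symm a : Fin n)).val < i then ε (ψ.symm a) else 0) := by
    intro a b; rw [hM]; exact entry_formula Gr ψ ε i a b
  have hsym : M.IsHermitian := by
    rw [Matrix.IsHermitian]
    ext a b
    rw [Matrix.conjTranspose_apply, star_trivial, hent a b, hent b a]
    by_cases hab : a = b
    · subst hab; rfl
    · have h1 : ¬(b = a) := fun h => hab h.symm
      have hadj : Gr.adjMatrix ℝ b a = Gr.adjMatrix ℝ a b := by
        have h2 := Matrix.transpose_apply (Gr.adjMatrix ℝ) a b
        rw [SimpleGraph.transpose_adjMatrix] at h2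
        exact h2.symm
      simp only [hent a b, hent b a, hadj]
      simp [hab, h1]
  have hdiaglo : ∀ t, (2 * d : ℝ) ≤ M t t := by
    intro t
    rw [hent t t]
    have h0 : Gr.adjMatrix ℝ t t = 0 := by simp
    rw [h0, if_pos rfl, zero_add]
    by_cases hc : ((ψ.symm t : Fin n)).val < i
    · rw [if_pos ⟨rfl, hc⟩]
      linarith [(hε _ hc).1]
    · rw [if_neg (fun h => hc h.2)]; linarith
  have hdiaghi : ∀ t, M t t ≤ (2 * d : ℝ) + 1 := by
    intro t
    rw [hent t t]
    have h0 : Gr.adjMatrix ℝ t t = 0 := by simp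
    rw [h0, if_pos rfl, zero_add]
    by_cases hc : ((ψ.symm t : Fin n)).val < i
    · rw [if_pos ⟨rfl, hc⟩]
      linarith [(hε _ hc).2]
    · rw [if_neg (fun h => hc h.2)]; linarith
  have hrow : ∀ t, ∑ s ∈ Finset.univ.erase t, |M t s| ≤ (d : ℝ) := by
    intro t
    have h1 : ∀ s ∈ Finset.univ.erase t, |M t s| = Gr.adjMatrix ℝ t s := by
      intro s hs
      have hts : t ≠ s := fun h => (Finset.mem_erase.mp hs).1 h.symm
      rw [hent t s, if_neg hts, if_neg (fun hc => hts hc.1), add_zero, add_zero]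
      rw [SimpleGraph.adjMatrix_apply]
      split <;> norm_num
    rw [Finset.sum_congr rfl h1]
    have h2 : ∑ s ∈ Finset.univ.erase t, Gr.adjMatrix ℝ t s = ∑ s, Gr.adjMatrix ℝ t s :=
      Finset.sum_erase _ (by simp)
    rw [h2, adj_row_sum]
    have h3 : Gr.degree t ≤ d := hdG ▸ Finset.le_sup (f := fun v => Gr.degree v) (Finset.mem_univ t)
    exact_mod_cast h3
  have hpos : (0 : ℝ) < 2 * d - d := by
    have : (1 : ℝ) ≤ d := by exact_mod_cast hd
    linarith
  obtain ⟨h1, h2⟩ := det_bounds M hsym (2 * d) (2 * d + 1) d hdiaglo hdiaghi hrow hpos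
  refine ⟨h1, le_trans h2 ?_⟩
  apply pow_le_pow_left₀ (by positivity)
  linarith


lemma card_filter_lt {n : ℕ} (i : ℕ) (hin : i ≤ n) :
    (Finset.univ.filter (fun t : Fin n => t.val < i)).card = i := by
  apply Finset.card_eq_of_bijective (fun j hj => (⟨j, lt_of_lt_of_le hj hin⟩ : Fin n))
  · intro a ha
    exact ⟨a.val, (Finset.mem_filter.mp ha).2, Fin.ext rfl⟩
  · intro j hj
    simp [hj]
  · intro j1 j2 h1 h2 heq
    exact congrArg Fin.val heq

lemma prod_scale {n N : ℕ} (ψ : Equiv.Perm (Fin n)) (i : ℕ) (hin : i ≤ n) :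
    (∏ b : Fin n, (if ((ψ.symm b : Fin n)).val < i then (10:ℝ)^N else 1)) = 10 ^ (N * i) := by
  rw [← Equiv.prod_comp ψ (fun b => if ((ψ.symm b : Fin n)).val < i then (10:ℝ)^N else 1)]
  simp only [Equiv.symm_apply_apply]
  rw [Finset.prod_ite, Finset.prod_const, Finset.prod_const, one_pow, mul_one,
    card_filter_lt i hin, ← pow_mul]
lemma exists_int_dets {n d N : ℕ} (Gr : SimpleGraph (Fin n)) [DecidableRel Gr.Adj]
    (ψ : Equiv.Perm (Fin n)) (ε : Fin n → ℝ) (m : Fin n → ℤ) (i : ℕ) (hin : i ≤ n)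
    (hε : ∀ t : Fin n, t.val < i → ε t = (m t : ℝ) / 10 ^ N)
    (M : Matrix (Fin n) (Fin n) ℝ)
    (hM : M = Gr.adjMatrix ℝ + (2 * d : ℝ) • (1 : Matrix (Fin n) (Fin n) ℝ) +
      ∑ t ∈ Finset.univ.filter (fun t : Fin n => t.val < i),
        ε t • Matrix.single (ψ t) (ψ t) 1) :
    (∃ z : ℤ, (z : ℝ) = 10 ^ (N * i) * M.det) ∧
    ∀ κ : Fin n, ¬ ((ψ.symm κ : Fin n)).val < i →
      ∃ z : ℤ, (z : ℝ) = 10 ^ (N * i) * minorDet M {κ} := by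
  have hpow : ((10:ℝ) ^ N) ≠ 0 := by positivity
  set v : Fin n → ℝ := fun b => if ((ψ.symm b : Fin n)).val < i then (10:ℝ)^N else 1 with hv
  set Z : Matrix (Fin n) (Fin n) ℤ := Matrix.of fun a b =>
    (Gr.adjMatrix ℤ a b + 2 * d * (if a = b then 1 else 0)) *
      (if ((ψ.symm b : Fin n)).val < i then (10:ℤ)^N else 1) +
    (if a = b ∧ ((ψ.symm b : Fin n)).val < i then m (ψ.symm b) else 0) with hZ
  have h : ∀ a b, ((Z a b : ℤ) : ℝ) = v b * M a b := by
    intro a b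
    have hMab : M a b = Gr.adjMatrix ℝ a b + (if a = b then (2 * d : ℝ) else 0)
        + (if a = b ∧ ((ψ.symm a : Fin n)).val < i then ε (ψ.symm a) else 0) := by
      rw [hM]; exact entry_formula Gr ψ ε i a b
    have hadj : ((Gr.adjMatrix ℤ a b : ℤ) : ℝ) = Gr.adjMatrix ℝ a b := by
      by_cases hab : Gr.Adj a b <;> simp [hab]
    rw [hMab, hZ, hv]
    simp only [Matrix.of_apply]
    by_cases h2 : a = b
    · subst h2
      by_cases h1 : ((ψ.symm a : Fin n)).val < i
      · rw [hε _ h1]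
        simp only [h1, and_true, if_true, ite_true, and_self, if_pos rfl]
        push_cast [hadj]
        field_simp
        try ring
      · simp only [h1, and_false, if_false, ite_false, if_pos rfl, and_true]
        push_cast [hadj]
        ring
    · have hc : ¬(a = b ∧ ((ψ.symm b : Fin n)).val < i) := fun hc => h2 hc.1
      have hca : ¬(a = b ∧ ((ψ.symm a : Fin n)).val < i) := fun hc => h2 hc.1
      by_cases h1 : ((ψ.symm b : Fin n)).val < i
      · simp only [if_neg h2, if_pos h1, if_neg hc, if_neg hca]
        push_cast [hadj]
        ring
      · simp only [if_neg h2, if_neg h1, if_neg hc, if_neg hca]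
        push_cast [hadj]
        ring
  constructor
  · refine ⟨Z.det, ?_⟩
    rw [det_int_scaled M v Z h, prod_scale ψ i hin]
  · intro κ hκ
    refine ⟨(Z.submatrix (fun b : ↥(({κ} : Finset (Fin n))ᶜ) => (b : Fin n))
      (fun b : ↥(({κ} : Finset (Fin n))ᶜ) => (b : Fin n))).det, ?_⟩
    have h' : ∀ a b : ↥(({κ} : Finset (Fin n))ᶜ),
        (((Z.submatrix (fun b : ↥(({κ} : Finset (Fin n))ᶜ) => (b : Fin n))
          (fun b : ↥(({κ} : Finset (Fin n))ᶜ) => (b : Fin n))) a b : ℤ) : ℝ)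
        = v ↑b * (M.submatrix (fun b : ↥(({κ} : Finset (Fin n))ᶜ) => (b : Fin n))
          (fun b : ↥(({κ} : Finset (Fin n))ᶜ) => (b : Fin n))) a b := by
      intro a b
      exact h ↑a ↑b
    rw [show minorDet M {κ} = (M.submatrix (fun b : ↥(({κ} : Finset (Fin n))ᶜ) => (b : Fin n))
      (fun b : ↥(({κ} : Finset (Fin n))ᶜ) => (b : Fin n))).det from rfl]
    rw [det_int_scaled _ _ _ h']
    congr 1
    have hprod : (∏ b : ↥(({κ} : Finset (Fin n))ᶜ), v ↑b) = ∏ b ∈ ({κ} : Finset (Fin n))ᶜ, v b :=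
      Finset.prod_coe_sort _ _
    rw [hprod, Finset.compl_singleton,
      Finset.prod_erase Finset.univ (by simp only [hv]; rw [if_neg hκ]), hv, prod_scale ψ i hin]

/-- Proposition 2, separation inequality.  Vertices are `0`-indexed:
`Apow i = A + ∑_{t < i} εₜ Eₜ` (so the paper's `A⁽ⁱ⁾` with `i` modifications is
`Apow i`, and the paper's step `k ∈ {1,…,n}` corresponds to the vertex `k : Fin n`
with `k.val + 1` modifications performed). If `det (Apow i) = det (Bpow i)` for all
`i ≤ k.val` but `det (Apow (k.val+1)) ≠ det (Bpow (k.val+1))`, then the ratios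
`(A⁽ᵏ⁾)_{{k}}/det A⁽ᵏ⁾` and `(B⁽ᵏ⁾)_{{j}}/det B⁽ᵏ⁾` (with `j = φ k`) differ, by more
than `1/(10^{2kN}·(3(d+1))^{2n})`. -/
theorem prop2_separation {n d N : ℕ} (hd : 1 ≤ d) (hN : 1 ≤ N)
    (G H : SimpleGraph (Fin n)) [DecidableRel G.Adj] [DecidableRel H.Adj]
    (hdG : Finset.univ.sup (fun v => G.degree v) = d)
    (hdH : Finset.univ.sup (fun v => H.degree v) = d)
    (φ : Equiv.Perm (Fin n)) (k : Fin n) (j : Fin n) (hj : j = φ k)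
    (m : Fin n → ℤ) (ε : Fin n → ℝ)
    (hεm : ∀ t, t ≤ k → ε t = (m t : ℝ) / 10 ^ N ∧ 0 < m t ∧ m t < 10 ^ N)
    (Apow Bpow : ℕ → Matrix (Fin n) (Fin n) ℝ)
    (hA : ∀ i, Apow i = G.adjMatrix ℝ + (2 * d : ℝ) • (1 : Matrix (Fin n) (Fin n) ℝ) +
      ∑ t ∈ Finset.univ.filter (fun t : Fin n => t.val < i),
        ε t • Matrix.single t t 1)
    (hB : ∀ i, Bpow i = H.adjMatrix ℝ + (2 * d : ℝ) • (1 : Matrix (Fin n) (Fin n) ℝ) +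
      ∑ t ∈ Finset.univ.filter (fun t : Fin n => t.val < i),
        ε t • Matrix.single (φ t) (φ t) 1)
    (hdeq : ∀ i : ℕ, i ≤ k.val → (Apow i).det = (Bpow i).det)
    (hdne : (Apow (k.val + 1)).det ≠ (Bpow (k.val + 1)).det) :
    minorDet (Apow (k.val + 1)) {k} / (Apow (k.val + 1)).det ≠
      minorDet (Bpow (k.val + 1)) {j} / (Bpow (k.val + 1)).det ∧
    1 / (10 ^ (2 * (k.val + 1) * N) * (3 * ((d : ℝ) + 1)) ^ (2 * n)) <
      |minorDet (Apow (k.val + 1)) {k} / (Apow (k.val + 1)).det -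
        minorDet (Bpow (k.val + 1)) {j} / (Bpow (k.val + 1)).det| := by
  have hpowN : (0:ℝ) < 10 ^ N := by positivity
  -- epsilon facts
  have hεgood : ∀ t : Fin n, t.val < k.val + 1 →
      ε t = (m t : ℝ) / 10 ^ N ∧ 0 < ε t ∧ ε t ≤ 1 := by
    intro t ht
    have htk : t ≤ k := by rw [Fin.le_def]; omega
    obtain ⟨he, hm0, hm1⟩ := hεm t htk
    refine ⟨he, ?_, ?_⟩
    · rw [he]
      apply div_pos _ hpowN
      exact_mod_cast hm0
    · rw [he, div_le_one hpowN]
      have : (m t : ℝ) < ((10:ℤ) ^ N : ℝ) := by exact_mod_cast hm1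
      push_cast at this
      linarith
  have hε1 : ∀ t : Fin n, t.val < k.val → ε t = (m t : ℝ) / 10 ^ N :=
    fun t ht => (hεgood t (by omega)).1
  have hε1' : ∀ t : Fin n, t.val < k.val → 0 < ε t ∧ ε t ≤ 1 :=
    fun t ht => (hεgood t (by omega)).2
  have hε2' : ∀ t : Fin n, t.val < k.val + 1 → 0 < ε t ∧ ε t ≤ 1 :=
    fun t ht => (hεgood t ht).2
  have hin : k.val ≤ n := le_of_lt k.isLt
  -- matrix shape hypotheses (with explicit permutations)
  have hMA : ∀ i', Apow i' = G.adjMatrix ℝ + (2 * d : ℝ) • (1 : Matrix (Fin n) (Fin n) ℝ) +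
      ∑ t ∈ Finset.univ.filter (fun t : Fin n => t.val < i'),
        ε t • Matrix.single ((Equiv.refl (Fin n)) t) ((Equiv.refl (Fin n)) t) 1 := by
    intro i'
    rw [hA i']
    simp only [Equiv.refl_apply]
  -- determinant bounds
  obtain ⟨hDpos, hDle⟩ := det_bounds_graph hd G hdG (Equiv.refl (Fin n)) ε k.val hε1'
    (Apow k.val) (hMA k.val)
  obtain ⟨hdApos, hdAle⟩ := det_bounds_graph hd G hdG (Equiv.refl (Fin n)) ε (k.val + 1) hε2'
    (Apow (k.val + 1)) (hMA (k.val + 1))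
  obtain ⟨hdBpos, hdBle⟩ := det_bounds_graph hd H hdH φ ε (k.val + 1) hε2'
    (Bpow (k.val + 1)) (hB (k.val + 1))
  -- integrality
  obtain ⟨⟨zD, hzD⟩, hminA⟩ := exists_int_dets (N := N) G (Equiv.refl (Fin n)) ε m k.val hin hε1
    (Apow k.val) (hMA k.val)
  obtain ⟨zA, hzA⟩ := hminA k (by simp)
  obtain ⟨-, hminB⟩ := exists_int_dets (N := N) H φ ε m k.val hin hε1 (Bpow k.val) (hB k.val)
  obtain ⟨zB, hzB⟩ := hminB j (by rw [hj]; simp)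
  -- step relations
  have hfilter : Finset.univ.filter (fun t : Fin n => t.val < k.val + 1)
      = insert k (Finset.univ.filter (fun t : Fin n => t.val < k.val)) := by
    ext t
    simp only [Finset.mem_filter, Finset.mem_univ, true_and, Finset.mem_insert, Fin.ext_iff]
    omega
  have hknot : k ∉ Finset.univ.filter (fun t : Fin n => t.val < k.val) := by simp
  have hstepA : Apow (k.val + 1) = Apow k.val + ε k • Matrix.single k k 1 := by
    rw [hA (k.val + 1), hA k.val, hfilter, Finset.sum_insert hknot]
    abel
  have hstepB : Bpow (k.val + 1) = Bpow k.val + ε k • Matrix.single j j 1 := by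
    rw [hB (k.val + 1), hB k.val, hfilter, Finset.sum_insert hknot, hj]
    abel
  have hdA : (Apow (k.val + 1)).det
      = (Apow k.val).det + ε k * minorDet (Apow k.val) {k} := by
    rw [hstepA, det_add_smul_stdBasis]
  have hdB : (Bpow (k.val + 1)).det
      = (Apow k.val).det + ε k * minorDet (Bpow k.val) {j} := by
    rw [hstepB, det_add_smul_stdBasis, ← hdeq k.val le_rfl]
  have hmA : minorDet (Apow (k.val + 1)) {k} = minorDet (Apow k.val) {k} := by
    rw [hstepA, minorDet_add_smul_stdBasis]
  have hmB : minorDet (Bpow (k.val + 1)) {j} = minorDet (Bpow k.val) {j} := by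
    rw [hstepB, minorDet_add_smul_stdBasis]
  set D := (Apow k.val).det with hDdef
  set mA := minorDet (Apow k.val) {k} with hmAdef
  set mB := minorDet (Bpow k.val) {j} with hmBdef
  set dA := (Apow (k.val + 1)).det with hdAdef
  set dB := (Bpow (k.val + 1)).det with hdBdef
  have hmAB : mA ≠ mB := by
    intro h
    exact hdne (by rw [hdA, hdB, h])
  -- integer lower bounds
  set c := (10:ℝ) ^ (N * k.val) with hc
  have hcpos : (0:ℝ) < c := by positivity
  have hD1 : (1:ℝ) ≤ c * D := by
    have h0 : (0:ℝ) < (zD : ℝ) := by rw [hzD]; positivity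
    have h1 : (0:ℤ) < zD := by exact_mod_cast h0
    have h2 : (1:ℤ) ≤ zD := h1
    have h3 : (1:ℝ) ≤ (zD : ℝ) := by exact_mod_cast h2
    rwa [hzD] at h3
  have hzdiff : ((zA - zB : ℤ) : ℝ) = c * (mA - mB) := by
    push_cast
    rw [hzA, hzB]
    ring
  have hzne : zA - zB ≠ 0 := by
    intro h
    apply hmAB
    have h0 : ((zA - zB : ℤ) : ℝ) = 0 := by rw [h]; norm_num
    rw [hzdiff] at h0
    have := mul_eq_zero.mp h0
    rcases this with h1 | h1
    · exact absurd h1 (ne_of_gt hcpos)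
    · linarith [sub_eq_zero.mp h1]
  have habs : (1:ℝ) ≤ c * |mA - mB| := by
    have h1 : (1:ℤ) ≤ |zA - zB| := Int.one_le_abs hzne
    have h2 : (1:ℝ) ≤ |((zA - zB : ℤ) : ℝ)| := by exact_mod_cast h1
    rwa [hzdiff, abs_mul, abs_of_pos hcpos] at h2
  -- difference formula
  have hdiff : mA / dA - mB / dB = D * (mA - mB) / (dA * dB) := by
    rw [div_sub_div _ _ (ne_of_gt hdApos) (ne_of_gt hdBpos)]
    congr 1
    rw [hdA, hdB]
    ring
  have habsAB : |mA - mB| > 0 := abs_pos.mpr (sub_ne_zero.mpr hmAB)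
  constructor
  · rw [hmA, hmB]
    intro h
    have h0 : mA / dA - mB / dB = 0 := by rw [h]; ring
    rw [hdiff] at h0
    have h1 := div_eq_zero_iff.mp h0
    rcases h1 with h1 | h1
    · rcases mul_eq_zero.mp h1 with h2 | h2
      · exact absurd h2 (ne_of_gt hDpos)
      · exact hmAB (sub_eq_zero.mp h2)
    · exact absurd h1 (ne_of_gt (mul_pos hdApos hdBpos))
  · rw [hmA, hmB, hdiff, abs_div, abs_mul, abs_of_pos hDpos,
      abs_of_pos (mul_pos hdApos hdBpos)]
    have hCpos : (0:ℝ) < (3 * ((d : ℝ) + 1)) ^ (2 * n) := by positivity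
    rw [div_lt_div_iff₀ (by positivity) (mul_pos hdApos hdBpos)]
    have hP : (1:ℝ) ≤ (c * D) * (c * |mA - mB|) := by
      calc (1:ℝ) = 1 * 1 := by norm_num
        _ ≤ (c * D) * (c * |mA - mB|) :=
            mul_le_mul hD1 habs zero_le_one (le_trans zero_le_one hD1)
    have hQ : dA * dB ≤ (3 * ((d : ℝ) + 1)) ^ (2 * n) := by
      have h1 : dA * dB ≤ ((3:ℝ) * d + 1) ^ n * ((3:ℝ) * d + 1) ^ n :=
        mul_le_mul hdAle hdBle (le_of_lt hdBpos) (by positivity)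
      have h2 : ((3:ℝ) * d + 1) ^ n * ((3:ℝ) * d + 1) ^ n = ((3:ℝ) * d + 1) ^ (2 * n) := by
        rw [← pow_add]
        congr 1
        ring
      have h3 : ((3:ℝ) * d + 1) ^ (2 * n) ≤ (3 * ((d : ℝ) + 1)) ^ (2 * n) := by
        apply pow_le_pow_left₀ (by positivity)
        linarith
      linarith
    have hR : (10:ℝ) ^ (2 * (k.val + 1) * N) = c * c * 10 ^ (2 * N) := by
      rw [hc, ← pow_add, ← pow_add]
      congr 1
      ring
    have h10 : (1:ℝ) < 10 ^ (2 * N) := by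
      apply one_lt_pow₀ (by norm_num)
      omega
    calc 1 * (dA * dB) = dA * dB := one_mul _
      _ ≤ (3 * ((d : ℝ) + 1)) ^ (2 * n) := hQ
      _ < 10 ^ (2 * N) * (3 * ((d : ℝ) + 1)) ^ (2 * n) := lt_mul_of_one_lt_left hCpos h10
      _ ≤ ((c * D) * (c * |mA - mB|)) * (10 ^ (2 * N) * (3 * ((d : ℝ) + 1)) ^ (2 * n)) :=
          le_mul_of_one_le_left (by positivity) hP
      _ = D * |mA - mB| * (10 ^ (2 * (k.val + 1) * N) * (3 * ((d : ℝ) + 1)) ^ (2 * n)) := by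
          rw [hR]; ring
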